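/- Let D be a skew-adjoint Fredholm operator on a real Hilbert space. Then dim ker D mod 2 is invariant under continuous deformation of D through skew-adjoint Fredholm operators: if D_t, t ∈ [0,1], is a norm-continuous path of bounded skew-adjoint Fredholm operators, then dim ker D_0 ≡ dim ker D_1 (mod 2). -/

import Mathlib

open Module Matrix ContinuousLinearMap

set_option maxHeartbeats 1000000
set_option synthInstance.maxHeartbeats 1000000

local notation "⟪" x ", " y "⟫" => @inner ℝ _ _ x y


theorem skew_finrank_ker_mod_two {V : Type*} [NormedAddCommGroup V] [InnerProductSpace ℝ V]
    [FiniteDimensional ℝ V] (S : V →ₗ[ℝ] V)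
    (hS : ∀ x y : V, ⟪S x, y⟫ = -⟪x, S y⟫) :
    finrank ℝ (LinearMap.ker S) % 2 = finrank ℝ V % 2 := by
  set N := LinearMap.ker S with hN
  have hmaps : ∀ x ∈ Nᗮ, S x ∈ Nᗮ := by
    intro x hx
    rw [Submodule.mem_orthogonal]
    intro u hu
    have hu0 : S u = 0 := hu
    rw [real_inner_comm, hS x u, hu0, inner_zero_right, neg_zero]
  set T : Nᗮ →ₗ[ℝ] Nᗮ := S.restrict hmaps with hT
  have hTinj : Function.Injective T := by
    rw [← LinearMap.ker_eq_bot, LinearMap.ker_eq_bot']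
    intro x hx
    have hx1 : S x.1 = 0 := congrArg Subtype.val hx
    have hmemN : x.1 ∈ N := hx1
    have : ⟪x.1, x.1⟫ = 0 := by
      have := (Submodule.mem_orthogonal N x.1).mp x.2 x.1 hmemN
      rwa [real_inner_self_eq_norm_sq] at this ⊢
    exact Subtype.ext (inner_self_eq_zero.mp this)
  have heven : Even (finrank ℝ Nᗮ) := by
    by_contra hodd
    rw [Nat.not_even_iff_odd] at hodd
    have b := stdOrthonormalBasis ℝ Nᗮ
    set M := LinearMap.toMatrix b.toBasis b.toBasis T with hM
    have hMt : Mᵀ = -M := by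
      ext i j
      simp only [Matrix.transpose_apply, Matrix.neg_apply, hM, LinearMap.toMatrix_apply,
        b.coe_toBasis, b.coe_toBasis_repr_apply, b.repr_apply_apply]
      rw [Submodule.coe_inner, Submodule.coe_inner]
      have hTc : ∀ k : Nᗮ, (T k).1 = S k.1 := fun k => rfl
      rw [hTc, hTc]
      linarith [hS ((b j):V) ((b i):V), real_inner_comm (S ((b j):V)) ((b i):V)]
    have hdet0 : M.det = 0 := by
      have h1 : M.det = (-M).det := by rw [← hMt, Matrix.det_transpose]
      rw [Matrix.det_neg, Fintype.card_fin, hodd.neg_one_pow] at h1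
      linarith
    have hdetne : LinearMap.det T ≠ 0 := by
      have hTbij : Function.Bijective T :=
        ⟨hTinj, (LinearMap.injective_iff_surjective).mp hTinj⟩
      have := LinearEquiv.isUnit_det' (LinearEquiv.ofBijective T hTbij)
      have hco : ((LinearEquiv.ofBijective T hTbij) : Nᗮ →ₗ[ℝ] Nᗮ) = T :=
        LinearMap.ext fun _ => rfl
      rw [hco] at this
      exact this.ne_zero
    rw [← LinearMap.det_toMatrix b.toBasis, ← hM] at hdetne
    exact hdetne hdet0
  have hsum : finrank ℝ N + finrank ℝ Nᗮ = finrank ℝ V :=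
    N.finrank_add_finrank_orthogonal
  obtain ⟨m, hm⟩ := heven
  omega

/-- A bounded operator on a real Hilbert space is Fredholm if it has
finite-dimensional kernel and cokernel and closed range. -/
def IsFredholm {H : Type*} [NormedAddCommGroup H] [InnerProductSpace ℝ H]
    (T : H →L[ℝ] H) : Prop :=
  FiniteDimensional ℝ (LinearMap.ker (T : H →ₗ[ℝ] H)) ∧
    FiniteDimensional ℝ (H ⧸ LinearMap.range (T : H →ₗ[ℝ] H)) ∧
    IsClosed (LinearMap.range (T : H →ₗ[ℝ] H) : Set H)

theorem local_stability {H : Type*} [NormedAddCommGroup H] [InnerProductSpace ℝ H]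
    [CompleteSpace H] (D₀ : H →L[ℝ] H) (hskew₀ : ContinuousLinearMap.adjoint D₀ = -D₀)
    (hfred₀ : _root_.IsFredholm D₀) :
    ∃ ε > 0, ∀ D' : H →L[ℝ] H, ContinuousLinearMap.adjoint D' = -D' → ‖D' - D₀‖ < ε →
      finrank ℝ (LinearMap.ker (D' : H →ₗ[ℝ] H)) % 2 = finrank ℝ (LinearMap.ker (D₀ : H →ₗ[ℝ] H)) % 2 := by
  classical
  set K := LinearMap.ker (D₀ : H →ₗ[ℝ] H) with hK
  haveI : FiniteDimensional ℝ K := hfred₀.1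
  have hKcl : IsClosed (K : Set H) := K.closed_of_finiteDimensional
  haveI : CompleteSpace K := hKcl.completeSpace_coe
  set W := Kᗮ with hW
  haveI : CompleteSpace W := K.isClosed_orthogonal.completeSpace_coe
  -- skewness of D₀ as inner products
  have hsk₀ : ∀ u v : H, ⟪D₀ u, v⟫ = -⟪u, D₀ v⟫ := by
    intro u v
    have := ContinuousLinearMap.adjoint_inner_left D₀ v u
    rw [hskew₀] at this
    simp only [ContinuousLinearMap.neg_apply, inner_neg_left] at this
    linarith
  -- range of D₀ is W
  have hrange : LinearMap.range (D₀ : H →ₗ[ℝ] H) = W := by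
    set R := LinearMap.range (D₀ : H →ₗ[ℝ] H) with hR
    have hRcl : IsClosed (R : Set H) := hfred₀.2.2
    haveI : CompleteSpace R := hRcl.completeSpace_coe
    have hRo : Rᗮ = K := by
      ext v
      rw [Submodule.mem_orthogonal]
      constructor
      · intro h
        have h2 : ∀ x : H, ⟪x, D₀ v⟫ = 0 := by
          intro x
          have h4 := h (D₀ x) ⟨x, rfl⟩
          linarith [hsk₀ x v]
        show D₀ v = 0
        have := h2 (D₀ v)
        rwa [inner_self_eq_zero] at this
      · intro hv u hu
        obtain ⟨x, rfl⟩ := hu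
        have hv0 : D₀ v = 0 := hv
        have := hsk₀ v x
        rw [hv0, inner_zero_left] at this
        show ⟪D₀ x, v⟫ = 0
        linarith [real_inner_comm (D₀ x) v]
    calc R = Rᗮᗮ := (Submodule.orthogonal_orthogonal R).symm
    _ = W := by rw [hRo]
  set P := K.orthogonalProjectionOnto with hP
  set Q := W.orthogonalProjectionOnto with hQ
  have pK : ∀ x : K, P (x : H) = x := fun x => Submodule.orthogonalProjectionOnto_mem_subspace_eq_self x
  have qW : ∀ w : W, Q (w : H) = w := fun w => Submodule.orthogonalProjectionOnto_mem_subspace_eq_self w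
  have pW0 : ∀ w : W, P (w : H) = 0 := fun w =>
    Submodule.orthogonalProjectionOnto_apply_of_mem_orthogonal w.2
  have qK0 : ∀ x : K, Q (x : H) = 0 := fun x =>
    Submodule.orthogonalProjectionOnto_apply_of_mem_orthogonal
      (K.le_orthogonal_orthogonal x.2)
  have decomp : ∀ y : H, ((P y : H) + (Q y : H)) = y := fun y =>
    Submodule.starProjection_add_starProjection_orthogonal (K := K) y
  have innerP : ∀ (u : H) (y : K), ⟪(P u : H), (y : H)⟫ = ⟪u, (y : H)⟫ := by
    intro u y
    have h : ⟪u - (P u : H), (y : H)⟫ = 0 := Submodule.starProjection_inner_eq_zero u (y : H) y.2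
    have h2 : ⟪u - (P u : H), (y : H)⟫ = ⟪u, (y:H)⟫ - ⟪(P u : H), (y:H)⟫ := inner_sub_left _ _ _
    rw [h] at h2
    linarith
  have innerQ : ∀ (u : H) (w : W), ⟪(Q u : H), (w : H)⟫ = ⟪u, (w : H)⟫ := by
    intro u w
    have h : ⟪u - (Q u : H), (w : H)⟫ = 0 := Submodule.starProjection_inner_eq_zero u (w : H) w.2
    have h2 : ⟪u - (Q u : H), (w : H)⟫ = ⟪u, (w:H)⟫ - ⟪(Q u : H), (w:H)⟫ := inner_sub_left _ _ _
    rw [h] at h2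
    linarith
  have hmemW : ∀ v : W, D₀ (v : H) ∈ W := by
    intro v
    have : D₀ (v : H) ∈ LinearMap.range (D₀ : H →ₗ[ℝ] H) := ⟨(v : H), rfl⟩
    rwa [hrange] at this
  set E₀ : W →L[ℝ] W := (Q.comp D₀).comp W.subtypeL with hE₀
  have hE₀app : ∀ w : W, E₀ w = Q (D₀ (w : H)) := fun w => rfl
  have hE₀unit : IsUnit E₀ := by
    rw [ContinuousLinearMap.isUnit_iff_bijective]
    constructor
    · intro w w' hww
      have h0 : E₀ (w - w') = 0 := by rw [map_sub, hww, sub_self]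
      have h1 : D₀ ((w - w' : W) : H) = 0 := by
        have e1 : (Q (D₀ ((w - w' : W) : H)) : H) = D₀ ((w - w' : W) : H) :=
          Submodule.starProjection_eq_self_iff.mpr (hmemW _)
        rw [← e1, show Q (D₀ ((w - w' : W) : H)) = E₀ (w - w') from rfl, h0,
          Submodule.coe_zero]
      have hker : ((w - w' : W) : H) ∈ K := h1
      have hz : ⟪((w - w' : W) : H), ((w - w' : W) : H)⟫ = 0 :=
        (Submodule.mem_orthogonal K _).mp (w - w').2 _ hker
      have h3 : w - w' = 0 := Subtype.ext (inner_self_eq_zero.mp hz)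
      exact sub_eq_zero.mp h3
    · intro v
      have hv : (v : H) ∈ LinearMap.range (D₀ : H →ₗ[ℝ] H) := by rw [hrange]; exact v.2
      obtain ⟨u, hu⟩ := LinearMap.mem_range.mp hv
      refine ⟨Q u, ?_⟩
      have hPu : D₀ ((P u : H)) = 0 := (P u).2
      have hD : D₀ ((Q u : H)) = (v : H) := by
        have h5 := congrArg D₀ (decomp u)
        rw [map_add, hPu, zero_add] at h5
        rw [h5]
        exact hu
      rw [hE₀app, hD, qW]
  have hE₀mem : E₀ ∈ {x : W →L[ℝ] W | IsUnit x} := hE₀unit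
  obtain ⟨ε, hε, hball⟩ : ∃ ε > 0, Metric.ball E₀ ε ⊆ {x : W →L[ℝ] W | IsUnit x} :=
    Metric.isOpen_iff.mp Units.isOpen E₀ hE₀mem
  refine ⟨ε, hε, ?_⟩
  intro D' hskew' hnorm
  have hsk' : ∀ u v : H, ⟪D' u, v⟫ = -⟪u, D' v⟫ := by
    intro u v
    have := ContinuousLinearMap.adjoint_inner_left D' v u
    rw [hskew'] at this
    simp only [ContinuousLinearMap.neg_apply, inner_neg_left] at this
    linarith
  set E : W →L[ℝ] W := (Q.comp D').comp W.subtypeL with hEdef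
  have hEapp : ∀ w : W, E w = Q (D' (w : H)) := fun w => rfl
  have hEnear : ‖E - E₀‖ < ε := by
    have h1 : E - E₀ = (Q.comp (D' - D₀)).comp W.subtypeL := by
      ext w
      simp [hEdef, hE₀, ContinuousLinearMap.sub_apply, ContinuousLinearMap.comp_apply, map_sub]
    have b1 : ‖(Q.comp (D' - D₀)).comp W.subtypeL‖ ≤ ‖Q.comp (D' - D₀)‖ * ‖W.subtypeL‖ :=
      ContinuousLinearMap.opNorm_comp_le _ _
    have b2 : ‖Q.comp (D' - D₀)‖ ≤ ‖Q‖ * ‖D' - D₀‖ :=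
      ContinuousLinearMap.opNorm_comp_le _ _
    have hQn : ‖Q‖ ≤ 1 := W.orthogonalProjectionOnto_norm_le
    have hιn : ‖W.subtypeL‖ ≤ 1 := W.norm_subtypeL_le
    rw [h1]
    nlinarith [norm_nonneg (Q.comp (D' - D₀)), norm_nonneg (D' - D₀), norm_nonneg Q,
      norm_nonneg W.subtypeL]
  have hEunit : IsUnit E := hball (Metric.mem_ball.mpr (by exact lt_of_eq_of_lt (dist_eq_norm E E₀) hEnear))
  obtain ⟨u, huE⟩ := hEunit
  set F : W →L[ℝ] W := ((u⁻¹ : (W →L[ℝ] W)ˣ) : W →L[ℝ] W) with hFdef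
  have hFE : ∀ w : W, F (E w) = w := by
    intro w
    have h : ((u⁻¹ : (W →L[ℝ] W)ˣ) : W →L[ℝ] W) * u = 1 := u.inv_mul
    calc F (E w) = (((u⁻¹ : (W →L[ℝ] W)ˣ) : W →L[ℝ] W) * (u : W →L[ℝ] W)) w := by
          rw [huE]; rfl
    _ = w := by rw [h]; rfl
  have hEF : ∀ w : W, E (F w) = w := by
    intro w
    have h : (u : W →L[ℝ] W) * ((u⁻¹ : (W →L[ℝ] W)ˣ) : W →L[ℝ] W) = 1 := u.mul_inv
    calc E (F w) = ((u : W →L[ℝ] W) * ((u⁻¹ : (W →L[ℝ] W)ˣ) : W →L[ℝ] W)) w := by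
          rw [huE]; rfl
    _ = w := by rw [h]; rfl
  set A : K →L[ℝ] K := (P.comp D').comp K.subtypeL with hAdef
  set B : W →L[ℝ] K := (P.comp D').comp W.subtypeL with hBdef
  set C : K →L[ℝ] W := (Q.comp D').comp K.subtypeL with hCdef
  set S : K →L[ℝ] K := A - B.comp (F.comp C) with hSdef
  have hSapp : ∀ x : K, S x = A x - B (F (C x)) := fun x => rfl
  have hAapp : ∀ x : K, A x = P (D' (x : H)) := fun x => rfl
  have hBapp : ∀ w : W, B w = P (D' (w : H)) := fun w => rfl
  have hCapp : ∀ x : K, C x = Q (D' (x : H)) := fun x => rfl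
  set φ : K →L[ℝ] H := K.subtypeL - W.subtypeL.comp (F.comp C) with hφdef
  have hφapp : ∀ x : K, φ x = (x : H) - ((F (C x) : W) : H) := fun x => rfl
  have hPφ : ∀ x : K, P (φ x) = x := by
    intro x
    rw [hφapp, map_sub, pK, pW0, sub_zero]
  have hzero : ∀ z : H, P z = 0 → Q z = 0 → z = 0 := by
    intro z h1 h2
    have := decomp z
    rw [h1, h2] at this
    simpa using this.symm
  have hPD'φ : ∀ x : K, P (D' (φ x)) = S x := by
    intro x
    have h : D' (φ x) = D' (x : H) - D' ((F (C x) : W) : H) := by rw [hφapp, map_sub]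
    rw [h, map_sub]
    rfl
  have hQD'φ : ∀ x : K, Q (D' (φ x)) = C x - E (F (C x)) := by
    intro x
    have h : D' (φ x) = D' (x : H) - D' ((F (C x) : W) : H) := by rw [hφapp, map_sub]
    rw [h, map_sub]
    rfl
  have hker_fwd : ∀ x : K, S x = 0 → D' (φ x) = 0 := by
    intro x hx
    apply hzero
    · rw [hPD'φ, hx]
    · rw [hQD'φ, hEF, sub_self]
  have hkey : ∀ y : H, D' y = 0 → (Q y = -(F (C (P y))) ∧ S (P y) = 0 ∧ φ (P y) = y) := by
    intro y hy
    have hdy : D' ((P y : H)) + D' ((Q y : H)) = 0 := by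
      have := congrArg D' (decomp y)
      rw [map_add, hy] at this
      exact this
    have hQ0 : C (P y) + E (Q y) = 0 := by
      have := congrArg Q hdy
      rw [map_add, map_zero] at this
      exact this
    have hQy : Q y = -(F (C (P y))) := by
      have := congrArg F hQ0
      rw [map_add, map_zero, hFE] at this
      exact eq_neg_of_add_eq_zero_right this
    have hP0 : A (P y) + B (Q y) = 0 := by
      have := congrArg P hdy
      rw [map_add, map_zero] at this
      exact this
    have hS0 : S (P y) = 0 := by
      rw [hSapp]
      rw [hQy] at hP0
      rw [map_neg] at hP0
      have : A (P y) - B (F (C (P y))) = 0 := by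
        rw [sub_eq_add_neg]
        exact hP0
      exact this
    refine ⟨hQy, hS0, ?_⟩
    rw [hφapp]
    have := decomp y
    rw [hQy] at this
    push_cast at this
    rw [sub_eq_add_neg]
    exact this
  -- the kernel equivalence
  have hφmem : ∀ c : LinearMap.ker (S : K →ₗ[ℝ] K), φ ((c : K)) ∈ LinearMap.ker (D' : H →ₗ[ℝ] H) := by
    intro c
    rw [LinearMap.mem_ker]
    exact hker_fwd c.1 c.2
  have hPmem : ∀ c : LinearMap.ker (D' : H →ₗ[ℝ] H), P ((c : H)) ∈ LinearMap.ker (S : K →ₗ[ℝ] K) := by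
    intro c
    rw [LinearMap.mem_ker]
    exact (hkey c.1 c.2).2.1
  let f : LinearMap.ker (S : K →ₗ[ℝ] K) →ₗ[ℝ] LinearMap.ker (D' : H →ₗ[ℝ] H) :=
    LinearMap.codRestrict (LinearMap.ker (D' : H →ₗ[ℝ] H))
      ((φ : K →ₗ[ℝ] H).comp (LinearMap.ker (S : K →ₗ[ℝ] K)).subtype) hφmem
  let g : LinearMap.ker (D' : H →ₗ[ℝ] H) →ₗ[ℝ] LinearMap.ker (S : K →ₗ[ℝ] K) :=
    LinearMap.codRestrict (LinearMap.ker (S : K →ₗ[ℝ] K))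
      ((P : H →ₗ[ℝ] K).comp (LinearMap.ker (D' : H →ₗ[ℝ] H)).subtype) hPmem
  have hfg : f.comp g = LinearMap.id := by
    apply LinearMap.ext
    intro c
    apply Subtype.ext
    show φ (P ((c : H))) = (c : H)
    exact (hkey c.1 c.2).2.2
  have hgf : g.comp f = LinearMap.id := by
    apply LinearMap.ext
    intro c
    apply Subtype.ext
    show P (φ ((c : K))) = (c : K)
    exact hPφ _
  have hrankeq : finrank ℝ (LinearMap.ker (S : K →ₗ[ℝ] K)) = finrank ℝ (LinearMap.ker (D' : H →ₗ[ℝ] H)) :=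
    LinearEquiv.finrank_eq (LinearEquiv.ofLinear f g hfg hgf)
  -- skewness of S
  have tW : ∀ (w : W) (u : H), ⟪(w : H), u⟫ = ⟪w, Q u⟫ := by
    intro w u
    rw [Submodule.coe_inner]
    linarith [innerQ u w, real_inner_comm ((w : H)) u,
      real_inner_comm ((Q u : H)) ((w : H))]
  have hskS : ∀ x y : K, ⟪S x, y⟫ = -⟪x, S y⟫ := by
    intro x y
    have skewE : ∀ a b : W, ⟪E a, b⟫ = -⟪a, E b⟫ := by
      intro a b
      have e1 : ⟪E a, b⟫ = ⟪D' ((a : H)), (b : H)⟫ := by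
        rw [Submodule.coe_inner]; exact innerQ _ _
      have e2 : ⟪a, E b⟫ = ⟪D' ((b : H)), (a : H)⟫ := by
        rw [real_inner_comm, Submodule.coe_inner]; exact innerQ _ _
      rw [e1, e2]
      have := hsk' ((a : H)) ((b : H))
      linarith [real_inner_comm ((a : H)) (D' ((b : H)))]
    have tAxy : ⟪A x, y⟫ = ⟪D' ((x : H)), (y : H)⟫ := by
      rw [Submodule.coe_inner]; exact innerP _ _
    have tAyx : ⟪(x : K), A y⟫ = ⟪D' ((y : H)), (x : H)⟫ := by
      rw [real_inner_comm, Submodule.coe_inner]; exact innerP _ _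
    have tBx : ⟪B (F (C x)), y⟫ = ⟪D' ((F (C x) : H)), (y : H)⟫ := by
      rw [Submodule.coe_inner]; exact innerP _ _
    have tBy : ⟪(x : K), B (F (C y))⟫ = ⟪D' ((F (C y) : H)), (x : H)⟫ := by
      rw [real_inner_comm, Submodule.coe_inner]; exact innerP _ _
    have h1 : ⟪D' ((x : H)), (y : H)⟫ = -⟪D' ((y : H)), (x : H)⟫ := by
      have := hsk' ((x : H)) ((y : H))
      linarith [real_inner_comm ((x : H)) (D' ((y : H)))]
    have key : ⟪D' ((F (C x) : H)), (y : H)⟫ = -⟪D' ((F (C y) : H)), (x : H)⟫ := by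
      have c1 : ⟪D' ((F (C x) : H)), (y : H)⟫ = -⟪((F (C x) : H)), D' ((y : H))⟫ :=
        hsk' _ _
      have c2 : ⟪((F (C x) : H)), D' ((y : H))⟫ = ⟪F (C x), C y⟫ := by
        rw [tW (F (C x)) (D' ((y : H))), ← hCapp y]
      have c4 : ⟪F (C x), C y⟫ = ⟪F (C x), E (F (C y))⟫ := by rw [hEF]
      have c5 : ⟪F (C x), E (F (C y))⟫ = -⟪E (F (C x)), F (C y)⟫ := by
        linarith [skewE (F (C x)) (F (C y))]
      have c6 : ⟪E (F (C x)), F (C y)⟫ = ⟪C x, F (C y)⟫ := by rw [hEF]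
      have c7 : ⟪C x, F (C y)⟫ = ⟪D' ((x : H)), (F (C y) : H)⟫ := by
        rw [Submodule.coe_inner]; exact innerQ _ _
      have c8 : ⟪D' ((x : H)), (F (C y) : H)⟫ = -⟪(x : H), D' ((F (C y) : H))⟫ :=
        hsk' _ _
      have c9 : ⟪(x : H), D' ((F (C y) : H))⟫ = ⟪D' ((F (C y) : H)), (x : H)⟫ :=
        real_inner_comm _ _
      linarith
    have hSx : S x = A x - B (F (C x)) := hSapp x
    have hSy : S y = A y - B (F (C y)) := hSapp y
    rw [hSx, hSy, inner_sub_left, inner_sub_right]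
    linarith
  -- conclude via the finite-dimensional lemma
  have hmod : finrank ℝ (LinearMap.ker ((S : K →ₗ[ℝ] K))) % 2 = finrank ℝ K % 2 :=
    skew_finrank_ker_mod_two (S : K →ₗ[ℝ] K) (fun a b => hskS a b)
  have hkerco : LinearMap.ker ((S : K →ₗ[ℝ] K)) = LinearMap.ker (S : K →ₗ[ℝ] K) :=
    Submodule.ext fun z => Iff.rfl
  rw [hkerco] at hmod
  rw [← hrankeq, hmod, hK]

/-- Atiyah–Singer mod-2 index invariance: if `D t`, `t ∈ [0,1]`, is a norm-continuous
path of bounded skew-adjoint Fredholm operators on a real Hilbert space, then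
`dim ker D 0 ≡ dim ker D 1 (mod 2)`. -/
theorem mod_two_index_invariance {H : Type*} [NormedAddCommGroup H]
    [InnerProductSpace ℝ H] [CompleteSpace H]
    (D : ℝ → H →L[ℝ] H) (hcont : Continuous D)
    (hskew : ∀ t ∈ Set.Icc (0 : ℝ) 1, ContinuousLinearMap.adjoint (D t) = -(D t))
    (hfred : ∀ t ∈ Set.Icc (0 : ℝ) 1, _root_.IsFredholm (D t)) :
    Module.finrank ℝ (LinearMap.ker (D 0 : H →ₗ[ℝ] H)) % 2
      = Module.finrank ℝ (LinearMap.ker (D 1 : H →ₗ[ℝ] H)) % 2 := by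
  classical
  set f : ℝ → ℕ := fun t => finrank ℝ (LinearMap.ker (D t : H →ₗ[ℝ] H)) % 2 with hf
  have key : ∀ t ∈ Set.Icc (0:ℝ) 1, ∃ δ > 0, ∀ s ∈ Set.Icc (0:ℝ) 1,
      |s - t| < δ → f s = f t := by
    intro t ht
    obtain ⟨ε, hε, hloc⟩ := local_stability (D t) (hskew t ht) (hfred t ht)
    have hc : ContinuousAt D t := hcont.continuousAt
    obtain ⟨δ, hδ, hδ2⟩ := Metric.continuousAt_iff.mp hc ε hε
    refine ⟨δ, hδ, ?_⟩
    intro s hs hst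
    have h2 : dist (D s) (D t) < ε := hδ2 (by rwa [Real.dist_eq])
    rw [dist_eq_norm] at h2
    exact hloc (D s) (hskew s hs) h2
  choose! δ hδpos hδ using key
  set U : Set ℝ := ⋃ t ∈ {t | t ∈ Set.Icc (0:ℝ) 1 ∧ f t = f 0}, Metric.ball t (δ t) with hU
  set V : Set ℝ := ⋃ t ∈ {t | t ∈ Set.Icc (0:ℝ) 1 ∧ f t ≠ f 0}, Metric.ball t (δ t) with hV
  have hUopen : IsOpen U := isOpen_biUnion fun _ _ => Metric.isOpen_ball
  have hVopen : IsOpen V := isOpen_biUnion fun _ _ => Metric.isOpen_ball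
  have h0mem : (0:ℝ) ∈ Set.Icc (0:ℝ) 1 := Set.left_mem_Icc.mpr zero_le_one
  have h1mem : (1:ℝ) ∈ Set.Icc (0:ℝ) 1 := Set.right_mem_Icc.mpr zero_le_one
  have hcover : Set.Icc (0:ℝ) 1 ⊆ U ∪ V := by
    intro t ht
    by_cases hft : f t = f 0
    · left
      exact Set.mem_biUnion ⟨ht, hft⟩ (Metric.mem_ball_self (hδpos t ht))
    · right
      exact Set.mem_biUnion ⟨ht, hft⟩ (Metric.mem_ball_self (hδpos t ht))
  have hfrom : ∀ s ∈ Set.Icc (0:ℝ) 1, s ∈ U → f s = f 0 := by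
    intro s hs hsU
    obtain ⟨t, ⟨htIcc, htf⟩, hst⟩ := Set.mem_iUnion₂.mp hsU
    rw [Metric.mem_ball, Real.dist_eq] at hst
    rw [hδ t htIcc s hs hst, htf]
  have hfromV : ∀ s ∈ Set.Icc (0:ℝ) 1, s ∈ V → f s ≠ f 0 := by
    intro s hs hsV
    obtain ⟨t, ⟨htIcc, htf⟩, hst⟩ := Set.mem_iUnion₂.mp hsV
    rw [Metric.mem_ball, Real.dist_eq] at hst
    rw [hδ t htIcc s hs hst]
    exact htf
  show f 0 = f 1
  by_contra hne
  have hne' : f 1 ≠ f 0 := fun h => hne h.symm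
  have hUne : (Set.Icc (0:ℝ) 1 ∩ U).Nonempty := by
    refine ⟨0, h0mem, ?_⟩
    exact Set.mem_biUnion ⟨h0mem, rfl⟩ (Metric.mem_ball_self (hδpos 0 h0mem))
  have hVne : (Set.Icc (0:ℝ) 1 ∩ V).Nonempty := by
    refine ⟨1, h1mem, ?_⟩
    exact Set.mem_biUnion ⟨h1mem, hne'⟩ (Metric.mem_ball_self (hδpos 1 h1mem))
  obtain ⟨s, hsIcc, hsU, hsV⟩ :=
    isPreconnected_Icc U V hUopen hVopen hcover hUne hVne
  exact hfromV s hsIcc hsV (hfrom s hsIcc hsU)
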